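/- Let ω be an ultrafilter on a set I, let N ∈ ℕ, and let {(X_i, d_i)}_{i∈I} be metric spaces each having the approximate intermediate point property and each doubling with doubling constant N. Then for every r > 0 and every sequence (x_i)_{i∈I} with x_i ∈ X_i, there exist sequences (x_i^{(1)})_{i∈I}, …, (x_i^{(N)})_{i∈I} with x_i^{(k)} ∈ X_i such that: for every sequence (y_i)_{i∈I} with y_i ∈ X_i and ω-lim_i d_i(x_i, y_i) ≤ r, there exists k ∈ {1, …, N} with ω-lim_i d_i(x_i^{(k)}, y_i) ≤ r/2. (This is the pointwise form of the statement that the ultralimit of doubling length spaces with a common doubling constant is doubling with the same constant.) -/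

import Mathlib

open Filter ENNReal

/-- A metric space `X` has the approximate intermediate point property if for all
`x, y ∈ X`, every `η > 0` and every `s ∈ [0, d(x,y)]` there exists `z ∈ X` with
`d(x,z) ≤ s + η` and `d(z,y) ≤ d(x,y) − s + η`. Every length space has this
property. -/
def ApproxIntermediatePointProperty (X : Type*) [MetricSpace X] : Prop :=
  ∀ x y : X, ∀ η > (0 : ℝ), ∀ s ∈ Set.Icc (0 : ℝ) (dist x y),
    ∃ z : X, dist x z ≤ s + η ∧ dist z y ≤ dist x y - s + η

/-- A metric space is doubling with doubling constant `N` if every closed ball can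
be covered by at most `N` closed balls of half the radius. -/
def DoublingWithConstant (X : Type*) [MetricSpace X] (N : ℕ) : Prop :=
  ∀ (x : X) (R : ℝ), ∃ c : Fin N → X,
    Metric.closedBall x R ⊆ ⋃ k : Fin N, Metric.closedBall (c k) (R / 2)

/-- The ultralimit of doubling metric spaces (with the approximate
intermediate point property, e.g. length spaces) with a common doubling constant
`N` is doubling with the same constant (pointwise form). -/
theorem ultralimit_doubling
    {I : Type*} (ω : Ultrafilter I) (N : ℕ) (X : I → Type*) [∀ i, MetricSpace (X i)]
    (hX : ∀ i, ApproxIntermediatePointProperty (X i))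
    (hdoub : ∀ i, DoublingWithConstant (X i) N)
    (r : ℝ) (hr : 0 < r) (x : ∀ i, X i) :
    ∃ c : ∀ i, Fin N → X i,
      ∀ y : ∀ i, X i, ∀ L : ℝ≥0∞,
        Tendsto (fun i => edist (x i) (y i)) (ω : Filter I) (nhds L) →
        L ≤ ENNReal.ofReal r →
        ∃ k : Fin N, ∃ M : ℝ≥0∞,
          Tendsto (fun i => edist (c i k) (y i)) (ω : Filter I) (nhds M) ∧
          M ≤ ENNReal.ofReal (r / 2) := by
  classical
  choose c hc using fun i => hdoub i (x i) r
  refine ⟨c, ?_⟩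
  intro y L hL hLr
  -- each sequence of distances has an ultralimit by compactness of ℝ≥0∞
  have hM : ∀ k : Fin N, ∃ M : ℝ≥0∞,
      Tendsto (fun i => edist (c i k) (y i)) (ω : Filter I) (nhds M) := by
    intro k
    set F : Ultrafilter ℝ≥0∞ := ω.map (fun i => edist (c i k) (y i)) with hF
    refine ⟨F.lim, ?_⟩
    have := F.le_nhds_lim
    rwa [hF, Ultrafilter.coe_map] at this
  choose M hMT using hM
  -- key claim: for every ε > 0 there is k with M k ≤ r/2 + ε
  have key : ∀ ε : ℝ, 0 < ε → ∃ k : Fin N,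
      M k ≤ ENNReal.ofReal (r / 2) + ENNReal.ofReal ε := by
    intro ε hε
    set η := min (ε / 2) (r / 2) with hηdef
    have hη0 : 0 < η := lt_min (by linarith) (by linarith)
    have hηε : 2 * η ≤ ε := by
      have := min_le_left (ε / 2) (r / 2); linarith
    have hηr : η ≤ r / 2 := min_le_right _ _
    -- modified points z i inside the ball of radius r around x i
    have hzex : ∀ i, ∃ z : X i, dist (x i) z ≤ r ∧
        edist z (y i) ≤ (edist (x i) (y i) - ENNReal.ofReal r) + ENNReal.ofReal ε := by
      intro i
      by_cases h : dist (x i) (y i) ≤ r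
      · exact ⟨y i, h, by simp⟩
      · push_neg at h
        obtain ⟨z, hz1, hz2⟩ := hX i (x i) (y i) η hη0 (r - η)
          ⟨by linarith, by linarith⟩
        refine ⟨z, by linarith, ?_⟩
        have hd : dist z (y i) ≤ (dist (x i) (y i) - r) + ε := by linarith
        calc edist z (y i) = ENNReal.ofReal (dist z (y i)) := edist_dist _ _
          _ ≤ ENNReal.ofReal ((dist (x i) (y i) - r) + ε) := ENNReal.ofReal_le_ofReal hd
          _ = ENNReal.ofReal (dist (x i) (y i) - r) + ENNReal.ofReal ε :=
              ENNReal.ofReal_add (by linarith) hε.le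
          _ = (ENNReal.ofReal (dist (x i) (y i)) - ENNReal.ofReal r) + ENNReal.ofReal ε := by
              rw [ENNReal.ofReal_sub _ hr.le]
          _ = (edist (x i) (y i) - ENNReal.ofReal r) + ENNReal.ofReal ε := by
              rw [edist_dist]
    choose z hz1 hz2 using hzex
    -- each z i lies in one of the half-radius balls
    have hgex : ∀ i, ∃ k : Fin N, dist (z i) (c i k) ≤ r / 2 := by
      intro i
      have : z i ∈ Metric.closedBall (x i) r := by
        simpa [Metric.mem_closedBall, dist_comm] using hz1 i
      obtain ⟨k, hk⟩ := Set.mem_iUnion.mp (hc i this)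
      exact ⟨k, Metric.mem_closedBall.mp hk⟩
    choose g hg using hgex
    -- the ultrafilter picks out one index k
    have hpick : ∃ k : Fin N, ∀ᶠ i in (ω : Filter I), g i = k := by
      by_contra hcon
      push_neg at hcon
      have hall : ∀ᶠ i in (ω : Filter I), ∀ k : Fin N, g i ≠ k := by
        rw [Filter.eventually_all]
        intro k
        exact hcon k
      obtain ⟨i, hi⟩ := hall.exists
      exact hi (g i) rfl
    obtain ⟨k, hk⟩ := hpick
    refine ⟨k, ?_⟩
    refine ENNReal.le_of_forall_pos_le_add ?_
    intro δ hδ _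
    have hLδ : L < ENNReal.ofReal r + (δ : ℝ≥0∞) := by
      refine lt_of_le_of_lt hLr ?_
      exact ENNReal.lt_add_right ENNReal.ofReal_ne_top
        (by exact_mod_cast hδ.ne')
    have hev : ∀ᶠ i in (ω : Filter I), edist (x i) (y i) < ENNReal.ofReal r + (δ : ℝ≥0∞) :=
      hL.eventually_lt_const hLδ
    have hbound : ∀ᶠ i in (ω : Filter I),
        edist (c i k) (y i) ≤ (ENNReal.ofReal (r / 2) + ENNReal.ofReal ε) + (δ : ℝ≥0∞) := by
      filter_upwards [hev, hk] with i hi hgi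
      have h1 : edist (c i k) (z i) ≤ ENNReal.ofReal (r / 2) := by
        rw [edist_dist]
        exact ENNReal.ofReal_le_ofReal (by rw [dist_comm]; simpa [hgi] using hg i)
      have h2 : edist (x i) (y i) - ENNReal.ofReal r ≤ (δ : ℝ≥0∞) :=
        tsub_le_iff_right.mpr (by rw [add_comm]; exact hi.le)
      calc edist (c i k) (y i) ≤ edist (c i k) (z i) + edist (z i) (y i) :=
            edist_triangle _ _ _
        _ ≤ ENNReal.ofReal (r / 2) +
            ((edist (x i) (y i) - ENNReal.ofReal r) + ENNReal.ofReal ε) :=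
            add_le_add h1 (hz2 i)
        _ ≤ ENNReal.ofReal (r / 2) + ((δ : ℝ≥0∞) + ENNReal.ofReal ε) :=
            by gcongr
        _ = (ENNReal.ofReal (r / 2) + ENNReal.ofReal ε) + (δ : ℝ≥0∞) := by ring
    exact le_of_tendsto (hMT k) hbound
  -- conclude: some k has M k ≤ r/2
  by_contra hcon
  push_neg at hcon
  have hcon' : ∀ k : Fin N, ENNReal.ofReal (r / 2) < M k := fun k =>
    hcon k (M k) (hMT k)
  obtain ⟨k₀, _⟩ := key 1 one_pos
  have hne : (Finset.univ : Finset (Fin N)).Nonempty := ⟨k₀, Finset.mem_univ _⟩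
  set t := Finset.univ.inf' hne M with ht
  have htlt : ENNReal.ofReal (r / 2) < t :=
    (Finset.lt_inf'_iff hne).mpr fun k _ => hcon' k
  obtain ⟨δ, hδ0, hδlt⟩ := ENNReal.lt_iff_exists_add_pos_lt.mp htlt
  obtain ⟨k, hk⟩ := key δ (by exact_mod_cast hδ0)
  have : t ≤ M k := Finset.inf'_le _ (Finset.mem_univ k)
  have : M k < M k := lt_of_le_of_lt hk
    (lt_of_le_of_lt (by rw [ENNReal.ofReal_coe_nnreal]) (lt_of_lt_of_le hδlt this))
  exact absurd this (lt_irrefl _)
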